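/- For all n ≥ 2, the number of partitions of n with all parts distinct in which every odd part exceeds every even part is strictly less than the number of partitions of n with even parts distinct, odd parts unrestricted, in which every even part exceeds every odd part. -/

import Mathlib

/-- Every odd part is greater than every even part. -/
def oddAbove (l : Multiset ℕ) : Prop :=
  ∀ a ∈ l, ∀ b ∈ l, Odd a → Even b → b < a

/-- Every even part is greater than every odd part. -/
def evenAbove (l : Multiset ℕ) : Prop :=
  ∀ a ∈ l, ∀ b ∈ l, Even a → Odd b → b < a

/-- The odd parts are distinct. -/
def oddDistinct (l : Multiset ℕ) : Prop :=
  ∀ a, Odd a → l.count a ≤ 1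

/-- The even parts are distinct. -/
def evenDistinct (l : Multiset ℕ) : Prop :=
  ∀ a, Even a → l.count a ≤ 1

/-- The number of partitions of `n` whose multiset of parts satisfies `P`. -/
noncomputable def pcount (n : ℕ) (P : Multiset ℕ → Prop) : ℕ :=
  Nat.card {p : Nat.Partition n // P p.parts}

namespace Stmt6Aux

/-- 2-adic valuation. -/
def v2 (m : ℕ) : ℕ := m.factorization 2

/-- odd part of a natural number. -/
def oddPart (m : ℕ) : ℕ := m / 2 ^ v2 m

/-- Glaisher splitting of a single part. -/
def g (m : ℕ) : Multiset ℕ := Multiset.replicate (2 ^ v2 m) (oddPart m)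

/-- Glaisher map on multisets. -/
def Φ (l : Multiset ℕ) : Multiset ℕ := l.bind g

lemma oddPart_odd {m : ℕ} (hm : m ≠ 0) : Odd (oddPart m) := by
  rw [Nat.odd_iff]
  exact Nat.two_dvd_ne_zero.mp (Nat.not_dvd_ordCompl Nat.prime_two hm)

lemma two_pow_v2_mul_oddPart (m : ℕ) : 2 ^ v2 m * oddPart m = m :=
  Nat.ordProj_mul_ordCompl_eq_self m 2

lemma v2_two_pow_mul {u : ℕ} (j : ℕ) (hu : Odd u) : v2 (2 ^ j * u) = j := by
  have hu0 : u ≠ 0 := hu.pos.ne'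
  have h2 : ¬ (2 : ℕ) ∣ u := Nat.two_dvd_ne_zero.mpr (Nat.odd_iff.mp hu)
  unfold v2
  rw [Nat.factorization_mul (pow_ne_zero _ two_ne_zero) hu0]
  simp [Nat.prime_two.factorization_pow, Nat.factorization_eq_zero_of_not_dvd h2]

lemma oddPart_two_pow_mul {u : ℕ} (j : ℕ) (hu : Odd u) : oddPart (2 ^ j * u) = u := by
  unfold oddPart
  rw [v2_two_pow_mul j hu, Nat.mul_div_cancel_left _ (pow_pos two_pos j)]

lemma mem_bitIndices_sum (S : Finset ℕ) (j : ℕ) :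
    j ∈ (∑ i ∈ S, 2 ^ i).bitIndices ↔ j ∈ S := by
  have h1 : (∑ i ∈ S, 2 ^ i) = ((S.sort (· ≤ ·)).map (fun i => 2 ^ i)).sum := by
    rw [Finset.sum_eq_multiset_sum, ← Finset.sort_eq S (· ≤ ·), Multiset.map_coe,
      Multiset.sum_coe]
  rw [h1, Nat.bitIndices_twoPowsum (Finset.sortedLT_sort S), Finset.mem_sort]

lemma count_Phi {l : Multiset ℕ} (hl : l.Nodup) (u : ℕ) :
    (Φ l).count u = ∑ m ∈ l.toFinset.filter (fun m => oddPart m = u), 2 ^ v2 m := by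
  classical
  have hval : l.toFinset.val = l := by
    rw [Multiset.toFinset_val]
    exact Multiset.dedup_eq_self.mpr hl
  rw [Φ, Multiset.count_bind]
  calc (Multiset.map (fun m => (g m).count u) l).sum
      = (Multiset.map (fun m => if oddPart m = u then 2 ^ v2 m else 0) l).sum := by
        congr 1
        exact Multiset.map_congr rfl (fun m _ => by rw [g, Multiset.count_replicate])
    _ = ∑ m ∈ l.toFinset, if oddPart m = u then 2 ^ v2 m else 0 := by
        rw [Finset.sum_eq_multiset_sum, hval]
    _ = ∑ m ∈ l.toFinset.filter (fun m => oddPart m = u), 2 ^ v2 m :=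
        (Finset.sum_filter _ _).symm

lemma mem_iff_phi {l : Multiset ℕ} (hl : l.Nodup) {u : ℕ} (hu : Odd u) (j : ℕ) :
    2 ^ j * u ∈ l ↔ j ∈ ((Φ l).count u).bitIndices := by
  classical
  set T := l.toFinset.filter (fun m => oddPart m = u) with hT
  have hinj : ∀ x ∈ T, ∀ y ∈ T, v2 x = v2 y → x = y := by
    intro x hx y hy hxy
    simp only [hT, Finset.mem_filter, Multiset.mem_toFinset] at hx hy
    calc x = 2 ^ v2 x * oddPart x := (two_pow_v2_mul_oddPart x).symm
      _ = 2 ^ v2 y * oddPart y := by rw [hx.2, hy.2, hxy]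
      _ = y := two_pow_v2_mul_oddPart y
  have hcount : (Φ l).count u = ∑ i ∈ T.image v2, 2 ^ i := by
    rw [count_Phi hl u]
    exact (Finset.sum_image hinj).symm
  rw [hcount, mem_bitIndices_sum]
  simp only [Finset.mem_image, hT, Finset.mem_filter, Multiset.mem_toFinset]
  constructor
  · intro hmem
    exact ⟨2 ^ j * u, ⟨hmem, oddPart_two_pow_mul j hu⟩, v2_two_pow_mul j hu⟩
  · rintro ⟨m, ⟨hm, hoc⟩, hv⟩
    have h : 2 ^ j * u = m := by
      rw [← hv, ← hoc]
      exact two_pow_v2_mul_oddPart m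
    rwa [h]

lemma phi_inj {l₁ l₂ : Multiset ℕ} (h₁ : l₁.Nodup) (h₂ : l₂.Nodup)
    (h0₁ : 0 ∉ l₁) (h0₂ : 0 ∉ l₂) (h : Φ l₁ = Φ l₂) : l₁ = l₂ := by
  rw [Multiset.Nodup.ext h₁ h₂]
  intro a
  rcases eq_or_ne a 0 with rfl | ha
  · exact iff_of_false h0₁ h0₂
  · have hdecomp := two_pow_v2_mul_oddPart a
    have hodd := oddPart_odd ha
    conv_lhs => rw [← hdecomp]
    conv_rhs => rw [← hdecomp]
    rw [mem_iff_phi h₁ hodd, mem_iff_phi h₂ hodd, h]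

lemma phi_sum (l : Multiset ℕ) : (Φ l).sum = l.sum := by
  rw [Φ, Multiset.sum_bind]
  calc (Multiset.map (fun m => (g m).sum) l).sum
      = (Multiset.map id l).sum := by
        congr 1
        refine Multiset.map_congr rfl (fun m _ => ?_)
        rw [g, Multiset.sum_replicate, smul_eq_mul, two_pow_v2_mul_oddPart, id]
    _ = l.sum := by rw [Multiset.map_id]

lemma phi_odd {l : Multiset ℕ} (h0 : 0 ∉ l) {x : ℕ} (hx : x ∈ Φ l) : Odd x := by
  rw [Φ, Multiset.mem_bind] at hx
  obtain ⟨m, hm, hxm⟩ := hx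
  rw [g, Multiset.mem_replicate] at hxm
  rw [hxm.2]
  exact oddPart_odd (fun h => h0 (h ▸ hm))

lemma card_lt {α β : Type*} [Finite β] (F : α → β) (hF : Function.Injective F)
    (w : β) (hw : ∀ a, F a ≠ w) : Nat.card α < Nat.card β := by
  have : Finite α := Finite.of_injective F hF
  have hinj : Function.Injective (Sum.elim F (fun _ : Unit => w)) := by
    rintro (a | a) (b | b) h <;> simp only [Sum.elim_inl, Sum.elim_inr] at h
    · exact congrArg Sum.inl (hF h)
    · exact absurd h (hw a)
    · exact absurd h.symm (hw b)
    · exact congrArg Sum.inr (Subsingleton.elim a b)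
  have hle := Nat.card_le_card_of_injective _ hinj
  rw [Nat.card_sum] at hle
  have h1 : Nat.card Unit = 1 := Nat.card_unique
  omega

end Stmt6Aux

open Stmt6Aux in
theorem stmt6 (n : ℕ) (hn : 2 ≤ n) :
    pcount n (fun l => l.Nodup ∧ oddAbove l) <
      pcount n (fun l => evenDistinct l ∧ evenAbove l) := by
  classical
  rw [pcount, pcount]
  have h0 : ∀ p : Nat.Partition n, (0 : ℕ) ∉ p.parts := by
    intro p hp
    exact Nat.lt_irrefl 0 (p.parts_pos hp)
  -- the Glaisher injection
  let F : {p : Nat.Partition n // p.parts.Nodup ∧ oddAbove p.parts} →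
      {p : Nat.Partition n // evenDistinct p.parts ∧ evenAbove p.parts} := fun p =>
    ⟨⟨Φ p.1.parts,
      fun {i} hi => (phi_odd (h0 p.1) hi).pos,
      by rw [phi_sum]; exact p.1.parts_sum⟩,
      by
        constructor
        · intro a ha
          have : a ∉ Φ p.1.parts := fun hmem =>
            (Nat.not_odd_iff_even.mpr ha) (phi_odd (h0 p.1) hmem)
          simp [Multiset.count_eq_zero.mpr this]
        · intro a ha b hb hea hob
          exact absurd (phi_odd (h0 p.1) ha) (Nat.not_odd_iff_even.mpr hea)⟩
  have hFinj : Function.Injective F := by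
    intro p q hpq
    have h : Φ p.1.parts = Φ q.1.parts :=
      congrArg (fun r : {p : Nat.Partition n //
        evenDistinct p.parts ∧ evenAbove p.parts} => r.1.parts) hpq
    exact Subtype.ext (Nat.Partition.ext
      (phi_inj p.2.1 q.2.1 (h0 p.1) (h0 q.1) h))
  rcases Nat.even_or_odd n with hne | hno
  · -- n even : witness is the single part {n}
    have hn0 : 0 < n := by omega
    let w : {p : Nat.Partition n // evenDistinct p.parts ∧ evenAbove p.parts} :=
      ⟨⟨{n}, fun {i} hi => by rw [Multiset.mem_singleton] at hi; omega,
        Multiset.sum_singleton n⟩,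
        by
          constructor
          · intro a ha
            by_cases h : a = n
            · simp [h]
            · simp [Multiset.count_singleton, h]
          · intro a ha b hb hea hob
            rw [Multiset.mem_singleton] at ha hb
            subst ha; subst hb
            exact absurd hea (Nat.not_even_iff_odd.mpr hob)⟩
    refine card_lt F hFinj w (fun p hp => ?_)
    have hparts : Φ p.1.parts = ({n} : Multiset ℕ) :=
      congrArg (fun r : {p : Nat.Partition n //
        evenDistinct p.parts ∧ evenAbove p.parts} => r.1.parts) hp
    have hmem : n ∈ Φ p.1.parts := by rw [hparts]; exact Multiset.mem_singleton_self n
    exact (Nat.not_odd_iff_even.mpr hne) (phi_odd (h0 p.1) hmem)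
  · -- n odd : witness is {n-1, 1}
    have hn3 : 3 ≤ n := by
      rcases hno with ⟨k, hk⟩; omega
    have hnodup : ((n - 1) ::ₘ {1} : Multiset ℕ).Nodup := by
      rw [Multiset.nodup_cons]
      constructor
      · rw [Multiset.mem_singleton]; omega
      · exact Multiset.nodup_singleton 1
    have heven : Even (n - 1) := Nat.Odd.sub_odd hno odd_one
    let w : {p : Nat.Partition n // evenDistinct p.parts ∧ evenAbove p.parts} :=
      ⟨⟨(n - 1) ::ₘ {1},
        fun {i} hi => by
          rw [Multiset.mem_cons, Multiset.mem_singleton] at hi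
          omega,
        by simp; omega⟩,
        by
          constructor
          · intro a ha
            exact Multiset.nodup_iff_count_le_one.mp hnodup a
          · intro a ha b hb hea hob
            rw [Multiset.mem_cons, Multiset.mem_singleton] at ha hb
            have ha' : a = n - 1 := by
              rcases ha with h | h
              · exact h
              · subst h; exact absurd hea (by simp)
            have hb' : b = 1 := by
              rcases hb with h | h
              · subst h; exact absurd heven (Nat.not_even_iff_odd.mpr hob)
              · exact h
            rw [ha', hb']; omega⟩
    refine card_lt F hFinj w (fun p hp => ?_)
    have hparts : Φ p.1.parts = ((n - 1) ::ₘ {1} : Multiset ℕ) :=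
      congrArg (fun r : {p : Nat.Partition n //
        evenDistinct p.parts ∧ evenAbove p.parts} => r.1.parts) hp
    have hmem : n - 1 ∈ Φ p.1.parts := by
      rw [hparts]; exact Multiset.mem_cons_self _ _
    exact (Nat.not_odd_iff_even.mpr heven) (phi_odd (h0 p.1) hmem)
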